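/- arXiv:1108.5341 — 4 statements merged into one kernel-verified Lean document; each statement's English description precedes it below -/
import Mathlib

section
/- Let ν be a probability measure on a measurable space and f a measurable function with 0 ≤ f ≤ M ν-almost-everywhere, M > 0. Then −log ∫ e^{−f} dν ≥ (1 − e^{−M})/M · ∫ f dν. Equivalently, ∫ f dν ≤ M/(1 − e^{−M}) · (−log ∫ e^{−f} dν). -/
open MeasureTheory

/-- If `0 ≤ f ≤ M` a.e. under a probability measure `ν`, then
`-log ∫ e^{-f} dν ≥ (1 - e^{-M})/M · ∫ f dν`, and equivalently
`∫ f dν ≤ M/(1 - e^{-M}) · (-log ∫ e^{-f} dν)`. -/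
theorem neg_log_integral_exp_neg_ge (Ω : Type*) [MeasurableSpace Ω]
    (ν : Measure Ω) [IsProbabilityMeasure ν] (f : Ω → ℝ) (M : ℝ) (hM : 0 < M)
    (hf : Measurable f) (hbd : ∀ᵐ x ∂ν, 0 ≤ f x ∧ f x ≤ M) :
    (1 - Real.exp (-M)) / M * ∫ x, f x ∂ν ≤ -Real.log (∫ x, Real.exp (-f x) ∂ν) ∧
    ∫ x, f x ∂ν ≤ M / (1 - Real.exp (-M)) * (-Real.log (∫ x, Real.exp (-f x) ∂ν)) := by
  set c : ℝ := (1 - Real.exp (-M)) / M with hc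
  have hexpM : Real.exp (-M) < 1 := Real.exp_lt_one_iff.2 (by linarith)
  have hcpos : 0 < c := div_pos (by linarith) hM
  -- pointwise inequality from convexity: e^{-t} ≤ 1 - c t for t ∈ [0, M]
  have hpt : ∀ t : ℝ, 0 ≤ t → t ≤ M → Real.exp (-t) ≤ 1 - c * t := by
    intro t ht htM
    have h1 : (0:ℝ) ≤ 1 - t / M := by
      rw [sub_nonneg]; exact div_le_one_of_le₀ htM hM.le
    have h2 : (0:ℝ) ≤ t / M := div_nonneg ht hM.le
    have h3 : (1 - t / M) + t / M = 1 := by ring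
    have := convexOn_exp.2 (Set.mem_univ (0:ℝ)) (Set.mem_univ (-M)) h1 h2 h3
    have hcomb : (1 - t / M) * 0 + (t / M) * (-M) = -t := by
      field_simp; ring
    simp only [smul_eq_mul] at this
    rw [hcomb, Real.exp_zero] at this
    calc Real.exp (-t) ≤ (1 - t / M) * 1 + (t / M) * Real.exp (-M) := this
      _ = 1 - c * t := by rw [hc]; field_simp; ring
  -- integrability
  have hint_f : Integrable f ν := by
    apply Integrable.mono' (integrable_const M) hf.aestronglyMeasurable
    filter_upwards [hbd] with x ⟨h0, h1⟩
    rw [Real.norm_eq_abs, abs_of_nonneg h0]; exact h1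
  have hint_e : Integrable (fun x => Real.exp (-f x)) ν := by
    apply Integrable.mono' (integrable_const 1)
      (Real.measurable_exp.comp hf.neg).aestronglyMeasurable
    filter_upwards [hbd] with x ⟨h0, _⟩
    simp only [Function.comp_apply, Real.norm_eq_abs, abs_of_nonneg (Real.exp_pos _).le]
    exact Real.exp_le_one_iff.2 (by simp only [Pi.neg_apply]; linarith)
  set I : ℝ := ∫ x, Real.exp (-f x) ∂ν with hI
  have hIpos : 0 < I := by
    have : (0:ℝ) < ∫ _x, Real.exp (-M) ∂ν := by
      rw [integral_const, probReal_univ]; simp [Real.exp_pos]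
    refine lt_of_lt_of_le this (integral_mono_ae (integrable_const _) hint_e ?_)
    filter_upwards [hbd] with x ⟨_, h1⟩
    exact Real.exp_le_exp.2 (by linarith)
  have hIle : I ≤ 1 - c * ∫ x, f x ∂ν := by
    have : I ≤ ∫ x, (1 - c * f x) ∂ν := by
      refine integral_mono_ae hint_e ((integrable_const 1).sub (hint_f.const_mul c)) ?_
      filter_upwards [hbd] with x ⟨h0, h1⟩
      exact hpt _ h0 h1
    rwa [integral_sub (integrable_const 1) (hint_f.const_mul c), integral_const,
      probReal_univ, one_smul, integral_const_mul] at this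
  have hkey : c * ∫ x, f x ∂ν ≤ -Real.log I := by
    have hpos2 : 0 < 1 - c * ∫ x, f x ∂ν := lt_of_lt_of_le hIpos hIle
    have hlog1 : Real.log I ≤ Real.log (1 - c * ∫ x, f x ∂ν) :=
      Real.log_le_log hIpos hIle
    have hlog2 : Real.log (1 - c * ∫ x, f x ∂ν) ≤ -(c * ∫ x, f x ∂ν) := by
      have := Real.log_le_sub_one_of_pos hpos2
      linarith
    linarith
  refine ⟨hkey, ?_⟩
  calc ∫ x, f x ∂ν ≤ (-Real.log I) / c := (le_div_iff₀' hcpos).2 hkey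
    _ = M / (1 - Real.exp (-M)) * (-Real.log I) := by
      rw [hc]; field_simp
end

section
/- The support function difference h_{D(1)}(u) − h_{D(0)}(u) (with D(0), D(1) as above) is nonzero exactly for unit vectors u in the spherical cap cap(v, √(2η)) = {u ∈ S^{d-1} : |u − v| ≤ √(2η)}, and is bounded above by Γη everywhere. -/
open scoped RealInnerProductSpace

/-- The support function of a set `K`, `h_K(u) = sup_{x ∈ K} ⟨x, u⟩`. -/
noncomputable def suppFn {E : Type*} [NormedAddCommGroup E] [InnerProductSpace ℝ E]
    (K : Set E) (u : E) : ℝ :=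
  sSup ((fun x => ⟪x, u⟫) '' K)

section Aux

variable {d : ℕ}

lemma aux_bdd (Γ : ℝ) (u : EuclideanSpace ℝ (Fin d)) (hu : ‖u‖ = 1)
    (S : Set (EuclideanSpace ℝ (Fin d)))
    (hS : S ⊆ Metric.closedBall 0 Γ) :
    ∀ y ∈ (fun x => ⟪x, u⟫) '' S, y ≤ Γ := by
  rintro y ⟨x, hx, rfl⟩
  have hx' : ‖x‖ ≤ Γ := by
    simpa [mem_closedBall_zero_iff] using hS hx
  calc ⟪x, u⟫ ≤ ‖x‖ * ‖u‖ := real_inner_le_norm x u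
    _ = ‖x‖ := by rw [hu, mul_one]
    _ ≤ Γ := hx'

lemma aux_inner_smul_self (a : ℝ) (u : EuclideanSpace ℝ (Fin d)) (hu : ‖u‖ = 1) :
    ⟪a • u, u⟫ = a := by
  rw [real_inner_smul_left, real_inner_self_eq_norm_sq, hu]; norm_num

lemma suppFn_ball (Γ : ℝ) (u : EuclideanSpace ℝ (Fin d)) (hu : ‖u‖ = 1) (hΓ : 0 ≤ Γ) :
    suppFn (Metric.closedBall (0 : EuclideanSpace ℝ (Fin d)) Γ) u = Γ := by
  apply le_antisymm
  · apply csSup_le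
    · exact ⟨⟪(0 : EuclideanSpace ℝ (Fin d)), u⟫, ⟨0, by simpa [mem_closedBall_zero_iff], rfl⟩⟩
    · exact aux_bdd Γ u hu _ le_rfl
  · apply le_csSup ⟨Γ, aux_bdd Γ u hu _ le_rfl⟩
    exact ⟨Γ • u, by simp [mem_closedBall_zero_iff, norm_smul, hu, abs_of_nonneg hΓ],
      aux_inner_smul_self Γ u hu⟩

end Aux

set_option maxHeartbeats 1600000 in
/-- The support function difference between the ball `B(0,Γ)` and the truncated ball
is nonzero exactly for unit vectors in the spherical cap `{u : ‖u - v‖ < √(2η)}`, and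
is everywhere bounded above by `Γη`. -/
theorem suppFn_diff_cap_support (d : ℕ) (hd : 1 ≤ d)
    (v u : EuclideanSpace ℝ (Fin d)) (η Γ : ℝ)
    (hv : ‖v‖ = 1) (hu : ‖u‖ = 1) (hη : 0 < η) (hη8 : η ≤ 1 / 8) (hΓ : 0 < Γ) :
    let D0 := Metric.closedBall (0 : EuclideanSpace ℝ (Fin d)) Γ ∩
      {x : EuclideanSpace ℝ (Fin d) | ⟪x, v⟫ ≤ Γ * (1 - η)}
    let D1 := Metric.closedBall (0 : EuclideanSpace ℝ (Fin d)) Γ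
    (suppFn D1 u - suppFn D0 u ≠ 0 ↔ ‖u - v‖ < Real.sqrt (2 * η)) ∧
    suppFn D1 u - suppFn D0 u ≤ Γ * η := by
  intro D0 D1
  have hη1 : η < 1 := lt_of_le_of_lt hη8 (by norm_num)
  obtain ⟨t, htdef⟩ : ∃ t : ℝ, ⟪u, v⟫ = t := ⟨_, rfl⟩
  have habs : |t| ≤ 1 := by
    have := abs_real_inner_le_norm u v
    rw [hu, hv, htdef] at this; simpa using this
  have ht1 : t ≤ 1 := (abs_le.mp habs).2
  have htm1 : -1 ≤ t := (abs_le.mp habs).1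
  have hD0sub : D0 ⊆ Metric.closedBall 0 Γ := Set.inter_subset_left
  have hbdd0 : BddAbove ((fun x => ⟪x, u⟫) '' D0) := ⟨Γ, aux_bdd Γ u hu _ hD0sub⟩
  have h0mem : (0 : EuclideanSpace ℝ (Fin d)) ∈ D0 := by
    constructor
    · simp [mem_closedBall_zero_iff, hΓ.le]
    · show ⟪(0 : EuclideanSpace ℝ (Fin d)), v⟫ ≤ Γ * (1 - η)
      rw [inner_zero_left]; nlinarith
  have hne0 : ((fun x => ⟪x, u⟫) '' D0).Nonempty := ⟨_, 0, h0mem, rfl⟩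
  have h1 : suppFn D1 u = Γ := suppFn_ball Γ u hu hΓ.le
  -- lower bound on suppFn D0
  have hlow : Γ * (1 - η) ≤ suppFn D0 u := by
    apply le_csSup hbdd0
    refine ⟨(Γ * (1 - η)) • u, ⟨?_, ?_⟩, aux_inner_smul_self _ u hu⟩
    · rw [mem_closedBall_zero_iff, norm_smul, hu, mul_one, Real.norm_eq_abs,
        abs_of_nonneg (by nlinarith)]
      nlinarith
    · show ⟪(Γ * (1 - η)) • u, v⟫ ≤ Γ * (1 - η)
      rw [real_inner_smul_left, htdef]
      nlinarith [mul_nonneg (mul_nonneg hΓ.le (by linarith : (0:ℝ) ≤ 1 - η))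
        (by linarith : (0:ℝ) ≤ 1 - t)]
  have hupp : suppFn D0 u ≤ Γ := csSup_le hne0 (aux_bdd Γ u hu _ hD0sub)
  -- case t ≤ 1 - η : suppFn D0 u = Γ
  have heqcase : t ≤ 1 - η → suppFn D0 u = Γ := by
    intro h
    apply le_antisymm hupp
    apply le_csSup hbdd0
    refine ⟨Γ • u, ⟨?_, ?_⟩, aux_inner_smul_self Γ u hu⟩
    · simp [mem_closedBall_zero_iff, norm_smul, hu, abs_of_nonneg hΓ.le]
    · show ⟪Γ • u, v⟫ ≤ Γ * (1 - η)
      rw [real_inner_smul_left, htdef]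
      exact mul_le_mul_of_nonneg_left h hΓ.le
  -- case t > 1 - η : suppFn D0 u < Γ
  have hltcase : 1 - η < t → suppFn D0 u < Γ := by
    intro hct
    obtain ⟨c, hcdef⟩ : ∃ c : ℝ, (1 - η : ℝ) = c := ⟨_, rfl⟩
    rw [hcdef] at hct
    have hc0 : 0 < c := by rw [← hcdef]; linarith
    have hc1 : c < 1 := by rw [← hcdef]; linarith
    have htpos : 0 < t := lt_trans hc0 hct
    obtain ⟨r, hrdef⟩ : ∃ r : ℝ, Real.sqrt (1 - c ^ 2) = r := ⟨_, rfl⟩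
    obtain ⟨s, hsdef⟩ : ∃ s : ℝ, Real.sqrt (1 - t ^ 2) = s := ⟨_, rfl⟩
    have hr2 : r ^ 2 = 1 - c ^ 2 := by rw [← hrdef]; exact Real.sq_sqrt (by nlinarith)
    have hs2 : s ^ 2 = 1 - t ^ 2 := by rw [← hsdef]; exact Real.sq_sqrt (by nlinarith)
    have hrpos : 0 < r := by rw [← hrdef]; exact Real.sqrt_pos.mpr (by nlinarith)
    have hs0 : 0 ≤ s := by rw [← hsdef]; exact Real.sqrt_nonneg _
    have hsr : s < r := by nlinarith
    obtain ⟨l, hldef⟩ : ∃ l : ℝ, t - c * s / r = l := ⟨_, rfl⟩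
    have hlr : l * r = t * r - c * s := by
      rw [← hldef]; field_simp
    have hl0 : 0 ≤ l := by
      have h1 : c * s / r ≤ c := by
        rw [div_le_iff₀ hrpos]; nlinarith
      rw [← hldef]; linarith
    have hnorm : ‖u - l • v‖ = s / r := by
      have h2 : ‖u - l • v‖ ^ 2 = (s / r) ^ 2 := by
        rw [norm_sub_sq_real, real_inner_smul_right, htdef, norm_smul, hv]
        rw [Real.norm_eq_abs, abs_of_nonneg hl0, hu]
        field_simp
        linear_combination (l*r - t*r - c*s) * hlr + s^2 * hr2 - r^2 * hs2
      have := congrArg Real.sqrt h2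
      rwa [Real.sqrt_sq (norm_nonneg _), Real.sqrt_sq (by positivity)] at this
    have key : ∀ y ∈ (fun x => ⟪x, u⟫) '' D0, y ≤ Γ * (c * t + r * s) := by
      rintro y ⟨x, ⟨hxb, hxc⟩, rfl⟩
      have hxn : ‖x‖ ≤ Γ := by simpa [mem_closedBall_zero_iff] using hxb
      have hxc' : ⟪x, v⟫ ≤ Γ * c := by
        have : ⟪x, v⟫ ≤ Γ * (1 - η) := hxc
        rwa [hcdef] at this
      have e : ⟪x, u⟫ = ⟪x, u - l • v⟫ + l * ⟪x, v⟫ := by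
        rw [inner_sub_right, real_inner_smul_right]; ring
      have b1 : ⟪x, u - l • v⟫ ≤ Γ * (s / r) := by
        calc ⟪x, u - l • v⟫ ≤ ‖x‖ * ‖u - l • v‖ := real_inner_le_norm _ _
          _ ≤ Γ * (s / r) := by
              rw [hnorm]
              apply mul_le_mul_of_nonneg_right hxn (by positivity)
      have b2 : l * ⟪x, v⟫ ≤ l * (Γ * c) := mul_le_mul_of_nonneg_left hxc' hl0
      have alg : Γ * (s / r) + l * (Γ * c) = Γ * (c * t + r * s) := by
        field_simp
        linear_combination c * hlr - s * hr2
      show ⟪x, u⟫ ≤ Γ * (c * t + r * s)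
      rw [e, ← alg]
      linarith
    have hr2s2 : r ^ 2 * s ^ 2 = (1 - c ^ 2) * (1 - t ^ 2) := by rw [hr2, hs2]
    have hcsrt : c * s < r * t := by nlinarith
    have hsum : c * t + r * s < 1 := by
      have hpos : 0 < c * t + r * s := by positivity
      have hsq : (c * t + r * s) ^ 2 < 1 := by
        nlinarith [pow_pos (by linarith : (0:ℝ) < r * t - c * s) 2, hr2, hs2, hr2s2]
      nlinarith
    calc suppFn D0 u ≤ Γ * (c * t + r * s) := csSup_le hne0 key
      _ < Γ := by nlinarith
  -- the cap condition
  have hcapiff : ‖u - v‖ < Real.sqrt (2 * η) ↔ 1 - η < t := by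
    have hnormsq : ‖u - v‖ ^ 2 = 2 - 2 * t := by
      rw [norm_sub_sq_real, hu, hv, htdef]; ring
    rw [show ‖u - v‖ < Real.sqrt (2 * η) ↔ ‖u - v‖ ^ 2 < 2 * η from
      Real.lt_sqrt (norm_nonneg _), hnormsq]
    constructor <;> intro h <;> linarith
  refine ⟨?_, ?_⟩
  · rw [h1, hcapiff]
    constructor
    · intro hne
      by_contra h
      push_neg at h
      exact hne (by rw [heqcase h]; ring)
    · intro h
      have := hltcase h
      exact ne_of_gt (by linarith)
  · rw [h1]
    nlinarith [hlow]
end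

section
/- If k ≥ (2/log 2)·m·d·log((2/log 2)·m) for integers m ≥ 1, d ≥ 1, then the binomial sum satisfies C(k,0) + C(k,1) + ⋯ + C(k,d) < 2^{k/m}. -/
set_option maxHeartbeats 1000000 in
/-- If `k ≥ (2/log 2) m d log((2/log 2) m)` then `∑_{j=0}^{d} C(k,j) < 2^{k/m}`. -/
theorem binomial_sum_lt_two_rpow (m d k : ℕ) (hm : 1 ≤ m) (hd : 1 ≤ d)
    (hk : (2 / Real.log 2) * m * d * Real.log ((2 / Real.log 2) * m) ≤ (k : ℝ)) :
    (∑ j ∈ Finset.range (d + 1), (k.choose j : ℝ)) < 2 ^ ((k : ℝ) / (m : ℝ)) := by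
  have hlog2 : 0 < Real.log 2 := Real.log_pos (by norm_num)
  have hlog2' : Real.log 2 < 0.6931471808 := Real.log_two_lt_d9
  set c : ℝ := 2 / Real.log 2 with hc
  have hM1 : (1:ℝ) ≤ (m:ℝ) := by exact_mod_cast hm
  have hD1 : (1:ℝ) ≤ (d:ℝ) := by exact_mod_cast hd
  have hcE : (2.7182818286:ℝ) ≤ c := by
    rw [hc, le_div_iff₀ hlog2]; nlinarith
  set s : ℝ := c * (m:ℝ) with hs_def
  have hcpos : (0:ℝ) < c := by linarith
  have hs : (0:ℝ) < s := by positivity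
  have hse : Real.exp 1 ≤ s := by
    have h1 : Real.exp 1 < 2.7182818286 := Real.exp_one_lt_d9
    nlinarith
  have hlogs : 1 ≤ Real.log s := (Real.le_log_iff_exp_le hs).mpr hse
  set L := Real.log s with hL
  have hk' : s * (d:ℝ) * L ≤ (k:ℝ) := hk
  have hs2 : (2:ℝ) < s := by nlinarith
  have hd0 : (0:ℝ) < (d:ℝ) := by linarith
  have hsL : (2:ℝ) ≤ s * L := by nlinarith
  have hstep : 2 * (d:ℝ) ≤ s * (d:ℝ) * L := by
    have := mul_le_mul_of_nonneg_left hsL hd0.le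
    nlinarith
  have hk0 : (0:ℝ) < (k:ℝ) := by linarith
  have hdk : (d:ℝ) ≤ (k:ℝ) := by linarith
  have hdkn : d ≤ k := by exact_mod_cast hdk
  have hkne : k ≠ 0 := by
    intro h; rw [h] at hk0; norm_num at hk0
  set r : ℝ := (d:ℝ) / (k:ℝ) with hr_def
  have hr0 : 0 < r := by positivity
  have hr1 : r ≤ 1 := by rw [hr_def, div_le_one hk0]; exact hdk
  have key : (∑ j ∈ Finset.range (d + 1), (k.choose j : ℝ)) * r ^ d < Real.exp d := by
    calc (∑ j ∈ Finset.range (d + 1), (k.choose j : ℝ)) * r ^ d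
        = ∑ j ∈ Finset.range (d + 1), (k.choose j : ℝ) * r ^ d := by
          rw [Finset.sum_mul]
      _ ≤ ∑ j ∈ Finset.range (d + 1), (k.choose j : ℝ) * r ^ j := by
          apply Finset.sum_le_sum
          intro j hj
          have hj' : j ≤ d := Nat.lt_succ_iff.mp (Finset.mem_range.mp hj)
          exact mul_le_mul_of_nonneg_left (pow_le_pow_of_le_one hr0.le hr1 hj')
            (by positivity)
      _ ≤ ∑ j ∈ Finset.range (k + 1), (k.choose j : ℝ) * r ^ j := by
          apply Finset.sum_le_sum_of_subset_of_nonneg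
          · exact Finset.range_subset_range.mpr (by omega)
          · intros; positivity
      _ = (r + 1) ^ k := by
          rw [add_pow]
          apply Finset.sum_congr rfl
          intro j _
          rw [one_pow]; ring
      _ < (Real.exp r) ^ k := by
          apply pow_lt_pow_left₀ (Real.add_one_lt_exp (ne_of_gt hr0)) (by positivity) hkne
      _ = Real.exp ((k:ℝ) * r) := by
          rw [← Real.exp_nat_mul]
      _ = Real.exp d := by
          congr 1
          rw [hr_def]
          field_simp
  have hrpow : (0:ℝ) < r ^ d := pow_pos hr0 d
  rw [← lt_div_iff₀ hrpow] at key
  refine lt_of_lt_of_le key ?_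
  -- show exp d / r^d ≤ 2 ^ (k/m)
  have h2 : (2:ℝ) ^ ((k:ℝ) / (m:ℝ)) = Real.exp (((k:ℝ) / (m:ℝ)) * Real.log 2) := by
    rw [Real.rpow_def_of_pos (by norm_num), mul_comm]
  have hrd : r ^ d = Real.exp ((d:ℝ) * Real.log r) := by
    rw [← Real.log_rpow hr0, Real.exp_log (Real.rpow_pos_of_pos hr0 _),
      Real.rpow_natCast]
  rw [h2, hrd, ← Real.exp_sub, Real.exp_le_exp]
  -- key analytic inequality
  have hq : (0:ℝ) < (k:ℝ) / (d:ℝ) := by positivity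
  have htangent : Real.log ((k:ℝ) / (d:ℝ) / s) ≤ (k:ℝ) / (d:ℝ) / s - 1 :=
    Real.log_le_sub_one_of_pos (by positivity)
  have hlogdiv : Real.log ((k:ℝ) / (d:ℝ) / s) = Real.log ((k:ℝ)/(d:ℝ)) - L := by
    rw [hL, Real.log_div (ne_of_gt hq) (ne_of_gt hs)]
  have hlogr : Real.log r = - Real.log ((k:ℝ)/(d:ℝ)) := by
    rw [hr_def, ← Real.log_inv]
    congr 1
    field_simp
  have hDL : (d:ℝ) * L ≤ (k:ℝ) / s := by
    rw [le_div_iff₀ hs]; nlinarith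
  have hfrac : (d:ℝ) * ((k:ℝ) / (d:ℝ) / s) = (k:ℝ) / s := by
    field_simp
  have hclog : c * Real.log 2 = 2 := by
    rw [hc]; field_simp
  have hm0 : (m:ℝ) ≠ 0 := by positivity
  have hfinal : (k:ℝ) / (m:ℝ) * Real.log 2 = 2 * ((k:ℝ) / s) := by
    rw [hs_def, hc]
    field_simp
  have h1 : (d:ℝ) * Real.log ((k:ℝ)/(d:ℝ)/s) = (d:ℝ) * Real.log ((k:ℝ)/(d:ℝ)) - (d:ℝ) * L := by
    rw [hlogdiv]; ring
  have h2' : (d:ℝ) * Real.log ((k:ℝ)/(d:ℝ)/s) ≤ (k:ℝ)/s - (d:ℝ) := by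
    calc (d:ℝ) * Real.log ((k:ℝ)/(d:ℝ)/s) ≤ (d:ℝ) * ((k:ℝ)/(d:ℝ)/s - 1) :=
          mul_le_mul_of_nonneg_left htangent hd0.le
      _ = (k:ℝ)/s - (d:ℝ) := by rw [mul_sub, hfrac, mul_one]
  have hmain : (d:ℝ) + (d:ℝ) * Real.log ((k:ℝ)/(d:ℝ)) ≤ 2 * ((k:ℝ)/s) := by
    linarith
  rw [hlogr, hfinal]
  linarith [hmain]
end

section
/- For probability measures P and Q on a common measurable space, Pinsker's inequality holds: D(P‖Q) ≥ 2·‖P − Q‖_TV², where ‖P−Q‖_TV = (1/2)∫|p − q| dμ for densities p, q with respect to a common dominating measure μ, and D(P‖Q) = ∫ p log(p/q) dμ (taken as ∞ if P is not absolutely continuous with respect to Q). -/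
open Real

noncomputable def pinG (t : ℝ) : ℝ := Real.log t - 3/2 * ((t-1)*(t+5))/(t+2)^2

noncomputable def pinH (t : ℝ) : ℝ := t * Real.log t - t + 1 - 3/2 * (t-1)^2/(t+2)

lemma pinG_deriv {t : ℝ} (ht : 0 < t) :
    HasDerivAt pinG ((t-1)^2*(t+8)/(t*(t+2)^3)) t := by
  have h2 : t + 2 ≠ 0 := by linarith
  have hd : HasDerivAt (fun t : ℝ => 3/2 * ((t-1)*(t+5))/(t+2)^2)
      ((3/2 * ((1*(t+5)) + (t-1)*1) * (t+2)^2 - 3/2 * ((t-1)*(t+5)) * (2*(t+2)^1*1)) / ((t+2)^2)^2) t := by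
    exact (((((hasDerivAt_id t).sub_const 1).mul ((hasDerivAt_id t).add_const 5)).const_mul
      (3/2)).div (((hasDerivAt_id t).add_const 2).pow 2) (by positivity))
  have hl : HasDerivAt Real.log t⁻¹ t := Real.hasDerivAt_log ht.ne'
  have := hl.sub hd
  refine this.congr_deriv ?_
  field_simp
  ring

lemma pinH_deriv {t : ℝ} (ht : 0 < t) : HasDerivAt pinH (pinG t) t := by
  have h2 : t + 2 ≠ 0 := by linarith
  have hd : HasDerivAt (fun t : ℝ => 3/2 * (t-1)^2/(t+2))
      ((3/2 * (2*(t-1)^1*1) * (t+2) - 3/2 * (t-1)^2 * 1) / (t+2)^2) t := by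
    exact ((((hasDerivAt_id t).sub_const 1).pow 2).const_mul (3/2)).div
      ((hasDerivAt_id t).add_const 2) h2
  have hml := Real.hasDerivAt_mul_log ht.ne'
  have := ((hml.sub (hasDerivAt_id t)).add_const 1).sub hd
  refine this.congr_deriv ?_
  unfold pinG
  field_simp
  ring

lemma pinG_mono : MonotoneOn pinG (Set.Ioi 0) := by
  refine monotoneOn_of_deriv_nonneg (convex_Ioi 0) ?_ ?_ ?_
  · exact fun x hx => ((pinG_deriv hx).continuousAt).continuousWithinAt
  · intro x hx
    rw [interior_Ioi] at hx
    exact (pinG_deriv hx).differentiableAt.differentiableWithinAt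
  · intro x hx
    rw [interior_Ioi] at hx
    rw [(pinG_deriv hx).deriv]
    have hx' : (0:ℝ) < x := hx
    positivity

lemma pinG_one : pinG 1 = 0 := by simp [pinG]

lemma pinH_one : pinH 1 = 0 := by norm_num [pinH]

lemma pinH_contOn : ContinuousOn pinH (Set.Ici 0) := by
  refine ContinuousOn.sub ?_ (ContinuousOn.div (by fun_prop) (by fun_prop) ?_)
  · exact ((Real.continuous_mul_log.sub continuous_id).add continuous_const).continuousOn
  · intro x hx
    simp only [Set.mem_Ici] at hx
    intro h; linarith

lemma pinH_nonneg {t : ℝ} (ht : 0 ≤ t) : 0 ≤ pinH t := by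
  rcases le_or_gt t 1 with h1 | h1
  · -- antitone on Icc 0 1
    have hanti : AntitoneOn pinH (Set.Icc 0 1) := by
      refine antitoneOn_of_deriv_nonpos (convex_Icc 0 1) (pinH_contOn.mono Set.Icc_subset_Ici_self) ?_ ?_
      · intro x hx
        rw [interior_Icc] at hx
        exact (pinH_deriv hx.1).differentiableAt.differentiableWithinAt
      · intro x hx
        rw [interior_Icc] at hx
        rw [(pinH_deriv hx.1).deriv]
        have := pinG_mono (Set.mem_Ioi.2 hx.1) (Set.mem_Ioi.2 one_pos) hx.2.le
        rwa [pinG_one] at this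
    have := hanti (Set.mem_Icc.2 ⟨ht, h1⟩) (Set.mem_Icc.2 ⟨zero_le_one, le_refl 1⟩) h1
    rwa [pinH_one] at this
  · have hmono : MonotoneOn pinH (Set.Ici 1) := by
      refine monotoneOn_of_deriv_nonneg (convex_Ici 1)
        (pinH_contOn.mono (Set.Ici_subset_Ici.2 zero_le_one)) ?_ ?_
      · intro x hx
        rw [interior_Ici] at hx
        exact (pinH_deriv (lt_trans one_pos hx)).differentiableAt.differentiableWithinAt
      · intro x hx
        rw [interior_Ici] at hx
        rw [(pinH_deriv (lt_trans one_pos hx)).deriv]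
        have := pinG_mono (Set.mem_Ioi.2 one_pos) (Set.mem_Ioi.2 (lt_trans one_pos hx)) hx.le
        rwa [pinG_one] at this
    have := hmono (Set.mem_Ici.2 (le_refl 1)) (Set.mem_Ici.2 h1.le) h1.le
    rwa [pinH_one] at this

/-- The key two-variable pointwise inequality. -/
lemma pinsker_pointwise {a b : ℝ} (ha : 0 ≤ a) (hb : 0 < b) :
    3/2 * (a - b)^2 / (a + 2*b) ≤ a * Real.log (a / b) - a + b := by
  have key := pinH_nonneg (t := a / b) (by positivity)
  unfold pinH at key
  have hab : a / b * Real.log (a / b) * b = a * Real.log (a/b) := by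
    field_simp
  have h2 : a / b + 2 = (a + 2*b)/b := by field_simp
  have hnb : 0 < a + 2*b := by linarith
  have := mul_le_mul_of_nonneg_right key hb.le
  rw [zero_mul] at this
  calc 3/2 * (a - b)^2 / (a + 2*b)
      = (3/2 * (a/b - 1)^2/(a/b + 2)) * b := by
        rw [h2]
        field_simp
    _ ≤ (a / b * Real.log (a / b) - a / b + 1) * b := by
        nlinarith [div_nonneg (mul_nonneg (by positivity : (0:ℝ) ≤ 3/2 * (a/b-1)^2) hb.le) hnb.le]
    _ = a * Real.log (a / b) - a + b := by field_simp

open MeasureTheory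

/-- Pinsker's inequality, in terms of densities `p, q` of probability measures with
respect to a common dominating σ-finite measure `μ`:
`D(P‖Q) = ∫ p log(p/q) dμ ≥ 2 ‖P - Q‖_TV² = 2 ((1/2) ∫ |p - q| dμ)²`, under the
absolute continuity condition `q = 0 → p = 0` a.e. -/
theorem pinsker_inequality (Ω : Type*) [MeasurableSpace Ω] (μ : Measure Ω)
    [SigmaFinite μ] (p q : Ω → ℝ) (hp : Measurable p) (hq : Measurable q)
    (hp0 : ∀ᵐ x ∂μ, 0 ≤ p x) (hq0 : ∀ᵐ x ∂μ, 0 ≤ q x)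
    (hpi : Integrable p μ) (hqi : Integrable q μ)
    (hp1 : ∫ x, p x ∂μ = 1) (hq1 : ∫ x, q x ∂μ = 1)
    (hac : ∀ᵐ x ∂μ, q x = 0 → p x = 0)
    (hint : Integrable (fun x => p x * Real.log (p x / q x)) μ) :
    2 * ((1 / 2) * ∫ x, |p x - q x| ∂μ) ^ 2 ≤
      ∫ x, p x * Real.log (p x / q x) ∂μ := by
  set f : Ω → ℝ := fun x => p x * Real.log (p x / q x) - p x + q x with hf_def
  set r : Ω → ℝ := fun x => (p x - q x) ^ 2 / (p x + 2 * q x) with hr_def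
  have hf_int : Integrable f μ := (hint.sub hpi).add hqi
  -- pointwise inequality a.e.
  have hkey : ∀ᵐ x ∂μ, 3 / 2 * r x ≤ f x ∧ 0 ≤ r x := by
    filter_upwards [hp0, hq0, hac] with x hpx hqx hacx
    rcases eq_or_lt_of_le hqx with hq0' | hq0'
    · have hp0' : p x = 0 := hacx hq0'.symm
      simp [hr_def, hf_def, hp0', ← hq0']
    · have h := pinsker_pointwise hpx hq0'
      constructor
      · simp only [hr_def, hf_def]
        calc 3 / 2 * ((p x - q x) ^ 2 / (p x + 2 * q x))
            = 3 / 2 * (p x - q x) ^ 2 / (p x + 2 * q x) := by ring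
          _ ≤ _ := h
      · have : 0 < p x + 2 * q x := by linarith
        positivity
  have hr_meas : Measurable r := ((hp.sub hq).pow_const 2).div (hp.add (hq.const_mul 2))
  have hr_int : Integrable r μ := by
    refine Integrable.mono' (hf_int.const_mul (2 / 3)) hr_meas.aestronglyMeasurable ?_
    filter_upwards [hkey] with x ⟨h1, h2⟩
    rw [Real.norm_of_nonneg h2]
    linarith
  -- ∫ f = KL
  have hf_eq : ∫ x, f x ∂μ = ∫ x, p x * Real.log (p x / q x) ∂μ := by
    simp only [hf_def]
    have h1 := integral_sub hint hpi
    have h2 := integral_add (hint.sub hpi) hqi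
    simp only [Pi.sub_apply] at h2
    rw [h2, h1, hp1, hq1]
    ring
  have hKL : 3 / 2 * ∫ x, r x ∂μ ≤ ∫ x, p x * Real.log (p x / q x) ∂μ := by
    rw [← hf_eq, ← integral_const_mul]
    refine integral_mono_ae (hr_int.const_mul _) hf_int ?_
    filter_upwards [hkey] with x ⟨h1, _⟩ using h1
  -- Cauchy-Schwarz
  set u : Ω → ℝ := fun x => Real.sqrt (r x) with hu_def
  set v : Ω → ℝ := fun x => Real.sqrt (p x + 2 * q x) with hv_def
  have hu_sq : ∀ᵐ x ∂μ, u x ^ 2 = r x := by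
    filter_upwards [hkey] with x ⟨_, h2⟩ using Real.sq_sqrt h2
  have hv_sq : ∀ᵐ x ∂μ, v x ^ 2 = p x + 2 * q x := by
    filter_upwards [hp0, hq0] with x h1 h2 using Real.sq_sqrt (by linarith)
  have huv : ∀ᵐ x ∂μ, |p x - q x| = u x * v x := by
    filter_upwards [hp0, hq0, hkey] with x h1 h2 ⟨_, hr0⟩
    rcases eq_or_lt_of_le (by linarith : (0:ℝ) ≤ p x + 2 * q x) with hs | hs
    · have hpx : p x = 0 := by linarith
      have hqx : q x = 0 := by linarith
      simp [hu_def, hv_def, hr_def, hpx, hqx, ← hs]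
    · rw [hu_def, hv_def, ← Real.sqrt_mul hr0, hr_def]
      rw [div_mul_cancel₀ _ hs.ne', Real.sqrt_sq_eq_abs]
  have hu_mem : MemLp u (ENNReal.ofReal 2) μ := by
    rw [show ENNReal.ofReal 2 = 2 by norm_num]
    refine (memLp_two_iff_integrable_sq (hr_meas.sqrt.aestronglyMeasurable)).2 ?_
    exact hr_int.congr (hu_sq.mono fun x hx => hx.symm)
  have hv_mem : MemLp v (ENNReal.ofReal 2) μ := by
    rw [show ENNReal.ofReal 2 = 2 by norm_num]
    refine (memLp_two_iff_integrable_sq ((hp.add (hq.const_mul 2)).sqrt.aestronglyMeasurable)).2 ?_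
    exact (hpi.add (hqi.const_mul 2)).congr (hv_sq.mono fun x hx => hx.symm)
  have hpq2 : (2:ℝ).HolderConjugate 2 := Real.holderConjugate_iff.mpr ⟨one_lt_two, by norm_num⟩
  have hCS := integral_mul_le_Lp_mul_Lq_of_nonneg hpq2
    (Filter.Eventually.of_forall fun x => Real.sqrt_nonneg _)
    (Filter.Eventually.of_forall fun x => Real.sqrt_nonneg _) hu_mem hv_mem
  have hIu : ∫ x, u x ^ (2:ℝ) ∂μ = ∫ x, r x ∂μ := by
    refine integral_congr_ae ?_
    filter_upwards [hu_sq] with x hx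
    rw [← hx]
    norm_num [Real.rpow_natCast (u x) 2]
  have hIv : ∫ x, v x ^ (2:ℝ) ∂μ = 3 := by
    have : ∫ x, v x ^ (2:ℝ) ∂μ = ∫ x, (p x + 2 * q x) ∂μ := by
      refine integral_congr_ae ?_
      filter_upwards [hv_sq] with x hx
      rw [← hx]
      norm_num [Real.rpow_natCast (v x) 2]
    rw [this, integral_add hpi (hqi.const_mul 2), integral_const_mul, hp1, hq1]
    norm_num
  have hAuv : ∫ x, |p x - q x| ∂μ = ∫ x, u x * v x ∂μ := integral_congr_ae huv
  rw [hIu, hIv, ← hAuv] at hCS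
  set A := ∫ x, |p x - q x| ∂μ with hA_def
  set R := ∫ x, r x ∂μ with hR_def
  have hR0 : 0 ≤ R := by
    refine integral_nonneg_of_ae ?_
    filter_upwards [hkey] with x ⟨_, h2⟩ using h2
  have hA0 : 0 ≤ A := integral_nonneg fun x => abs_nonneg _
  -- square the CS inequality
  have hsq : A ^ 2 ≤ 3 * R := by
    have hrhs : (R ^ (1/2:ℝ) * 3 ^ (1/2:ℝ)) ^ 2 = 3 * R := by
      rw [mul_pow, ← Real.rpow_natCast (R ^ (1/2:ℝ)) 2, ← Real.rpow_natCast ((3:ℝ) ^ (1/2:ℝ)) 2,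
        ← Real.rpow_mul hR0, ← Real.rpow_mul (by norm_num : (0:ℝ) ≤ 3)]
      norm_num [mul_comm]
    calc A ^ 2 ≤ (R ^ (1/2:ℝ) * 3 ^ (1/2:ℝ)) ^ 2 := by
          apply pow_le_pow_left₀ hA0 hCS
      _ = 3 * R := hrhs
  nlinarith [hKL, hsq]
end
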